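/- Let d ≥ 2 and n ≥ 1 be integers and set δ := 1/(n+2). Let x ∈ S^{n+δ} with x_d ≤ 1+δ, let v ∈ ℤ^d with all components nonnegative and v_d = 0, set w := x − (1−δ)v, and let π be a permutation of {1,…,d} such that: (i) 1 ≥ w_{π(1)} ≥ w_{π(2)} ≥ … ≥ w_{π(d)} ≥ 0 and π(d) = d; (ii) for every j with 1 ≤ j < d, if v_j > 0 then w_j > δ; and (iii) whenever w_{π(j)} = w_{π(j+1)} for 1 ≤ j < d, one has π(j) < π(j+1). Then the pair (v,π) is admissible for n+1 (i.e. v ∈ S^n and for every j < d with v_j = v_{j+1}, π⁻¹(j) < π⁻¹(j+1)), and x belongs to the Kuhn simplex k((1−δ)v, π). -/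

import Mathlib

/-- The right `d`-simplex `S^α = {x ∈ ℝ^d : α ≥ x_1 ≥ x_2 ≥ … ≥ x_d ≥ 0}`
(coordinates indexed by `Fin d`, in order). -/
def Sset (d : ℕ) (α : ℝ) : Set (Fin d → ℝ) :=
  {x | (∀ i : Fin d, 0 ≤ x i ∧ x i ≤ α) ∧ ∀ i j : Fin d, i ≤ j → x j ≤ x i}

/-- The Kuhn simplex `k(v,π) = {x : 1 ≥ (x−v)_{π(1)} ≥ … ≥ (x−v)_{π(d)} ≥ 0}`. -/
def kuhn (d : ℕ) (v : Fin d → ℝ) (π : Equiv.Perm (Fin d)) : Set (Fin d → ℝ) :=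
  {x | (∀ i : Fin d, 0 ≤ x (π i) - v (π i) ∧ x (π i) - v (π i) ≤ 1) ∧
       ∀ i j : Fin d, i ≤ j → x (π j) - v (π j) ≤ x (π i) - v (π i)}

/-- `(v,π)` with `v ∈ ℤ^d` is admissible for `m` if `v ∈ S^{m-1}` and whenever
`v_j = v_{j+1}`, `j` precedes `j+1` in `π`, i.e. `π⁻¹(j) < π⁻¹(j+1)`. -/
def admissible (d m : ℕ) (v : Fin d → ℤ) (π : Equiv.Perm (Fin d)) : Prop :=
  ((fun i => (v i : ℝ)) ∈ Sset d ((m : ℝ) - 1)) ∧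
  ∀ (j : Fin d) (h : (j : ℕ) + 1 < d),
    v j = v ⟨(j : ℕ) + 1, h⟩ → π.symm j < π.symm ⟨(j : ℕ) + 1, h⟩

/-- if `x ∈ S^{n+δ}` with `x_d ≤ 1+δ`, `v ∈ ℤ^d_+` with `v_d = 0`,
`w = x - (1-δ)v`, and `π` satisfies
(i) `1 ≥ w_{π(1)} ≥ … ≥ w_{π(d)} ≥ 0` with `π(d) = d`,
(ii) `v_j > 0 ⟹ w_j > δ` for `j < d`, and
(iii) equal components of `w` are ordered by index in `π`,
then `(v,π)` is admissible for `n+1` and `x ∈ k((1-δ)v, π)`. -/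
theorem type_a_cover (d n : ℕ) (hd : 2 ≤ d) (hn : 1 ≤ n)
    (δ : ℝ) (hδ : δ = ((n : ℝ) + 2)⁻¹)
    (x : Fin d → ℝ) (hx : x ∈ Sset d ((n : ℝ) + δ))
    (hxd : x ⟨d - 1, by omega⟩ ≤ 1 + δ)
    (v : Fin d → ℤ) (hv : ∀ i, 0 ≤ v i) (hvd : v ⟨d - 1, by omega⟩ = 0)
    (w : Fin d → ℝ) (hw : w = fun i => x i - (1 - δ) * (v i : ℝ))
    (π : Equiv.Perm (Fin d))
    (hi : (∀ i : Fin d, 0 ≤ w (π i) ∧ w (π i) ≤ 1) ∧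
          (∀ i j : Fin d, i ≤ j → w (π j) ≤ w (π i)) ∧
          π ⟨d - 1, by omega⟩ = ⟨d - 1, by omega⟩)
    (hii : ∀ j : Fin d, (j : ℕ) + 1 < d → 0 < v j → δ < w j)
    (hiii : ∀ (j : Fin d) (h : (j : ℕ) + 1 < d),
        w (π j) = w (π ⟨(j : ℕ) + 1, h⟩) → π j < π ⟨(j : ℕ) + 1, h⟩) :
    admissible d (n + 1) v π ∧
      x ∈ kuhn d (fun i => (1 - δ) * (v i : ℝ)) π := by
  obtain ⟨hw1, hw2, hπd⟩ := hi
  obtain ⟨hx1, hx2⟩ := hx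
  have hδ0 : 0 < δ := by rw [hδ]; positivity
  have hδ1 : δ < 1 := by
    rw [hδ]
    rw [inv_lt_one_iff₀]
    right
    have : (1:ℝ) ≤ (n:ℝ) := by exact_mod_cast hn
    linarith
  -- bounds for w at every index
  have hw1' : ∀ i, 0 ≤ w i ∧ w i ≤ 1 := fun i => by
    have := hw1 (π.symm i); simpa using this
  -- monotonicity of v
  have hvmono : ∀ i j : Fin d, i ≤ j → v j ≤ v i := by
    intro i j hij
    by_contra hlt
    push_neg at hlt
    have hvj1 : v i + 1 ≤ v j := hlt
    have hxm : x j ≤ x i := hx2 i j hij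
    have hwj : w j ≤ w i - (1 - δ) := by
      rw [hw]
      simp only []
      have : ((v i : ℝ)) + 1 ≤ (v j : ℝ) := by exact_mod_cast hvj1
      nlinarith [hδ1]
    have hvjpos : 0 < v j := by linarith [hv i]
    by_cases hj : (j : ℕ) + 1 < d
    · have := hii j hj hvjpos
      have := (hw1' i).2
      linarith
    · have hjd : j = ⟨d - 1, by omega⟩ := by
        apply Fin.ext; have := j.isLt; simp; omega
      rw [hjd, hvd] at hvjpos
      exact absurd hvjpos (lt_irrefl 0)
  -- v i ≤ n
  have hvbound : ∀ i : Fin d, (v i : ℝ) ≤ (n : ℝ) := by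
    intro i
    by_cases hj : (i : ℕ) + 1 < d
    · rcases lt_or_eq_of_le (hv i) with hpos | hz
      · have hwi := hii i hj hpos
        have hxi := (hx1 i).2
        have hvi1 : (1 - δ) * (v i : ℝ) < (n : ℝ) := by
          rw [hw] at hwi; simp only [] at hwi; linarith
        have key : (n : ℝ) ≤ (1 - δ) * ((n : ℝ) + 1) := by
          have hi2 : δ * ((n:ℝ) + 2) = 1 := by
            rw [hδ]; field_simp
          nlinarith [hδ0]
        have : (v i : ℝ) < (n : ℝ) + 1 := by
          nlinarith [hδ1]
        have : v i < (n : ℤ) + 1 := by exact_mod_cast this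
        have : v i ≤ (n : ℤ) := by omega
        exact_mod_cast this
      · rw [← hz]; push_cast; positivity
    · have hjd : i = ⟨d - 1, by omega⟩ := by
        apply Fin.ext; have := i.isLt; simp; omega
      rw [hjd, hvd]; push_cast; positivity
  -- chain lemma: equal w values ordered by π
  have chain : ∀ m : ℕ, ∀ a : Fin d, ∀ h : (a : ℕ) + m + 1 < d,
      w (π a) = w (π ⟨(a : ℕ) + m + 1, h⟩) → π a < π ⟨(a : ℕ) + m + 1, h⟩ := by
    intro m
    induction m with
    | zero => intro a h heq; exact hiii a h heq
    | succ m ih =>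
      intro a h heq
      have h1 : (a : ℕ) + m + 1 < d := by omega
      have hle1 : w (π ⟨(a : ℕ) + m + 1, h1⟩) ≤ w (π a) :=
        hw2 a _ (by rw [Fin.le_def]; simp; omega)
      have hle2 : w (π ⟨(a : ℕ) + m + 1 + 1, by omega⟩) ≤ w (π ⟨(a : ℕ) + m + 1, h1⟩) :=
        hw2 _ _ (by rw [Fin.le_def]; simp)
      have heq2 : w (π ⟨(a : ℕ) + m + 1 + 1, by omega⟩) = w (π ⟨(a : ℕ) + (m + 1) + 1, h⟩) := by
        congr 2
      have e1 : w (π a) = w (π ⟨(a : ℕ) + m + 1, h1⟩) := by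
        rw [heq2] at hle2; linarith [heq ▸ (le_of_eq heq.symm)]
      have lt1 := ih a h1 e1
      have e2 : w (π ⟨(a : ℕ) + m + 1, h1⟩) = w (π ⟨(a : ℕ) + m + 1 + 1, by omega⟩) := by
        rw [heq2]; linarith
      have lt2 := hiii ⟨(a : ℕ) + m + 1, h1⟩ (by simpa using (by omega : (a:ℕ) + m + 1 + 1 < d)) (by
        convert e2 using 3)
      calc π a < π ⟨(a : ℕ) + m + 1, h1⟩ := lt1
        _ < _ := by convert lt2 using 3; simp only [Fin.val_mk]; omega
  refine ⟨⟨⟨fun i => ⟨show (0:ℝ) ≤ (v i : ℝ) by exact_mod_cast hv i,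
    show (v i : ℝ) ≤ ((n + 1 : ℕ) : ℝ) - 1 by push_cast; linarith [hvbound i]⟩,
    fun i j hij => show ((v j : ℝ)) ≤ (v i : ℝ) by exact_mod_cast hvmono i j hij⟩, ?_⟩, ?_, ?_⟩
  · -- part (b)
    intro j h hveq
    set a := π.symm j with ha
    set b := π.symm ⟨(j : ℕ) + 1, h⟩ with hb
    have hπa : π a = j := π.apply_symm_apply j
    have hπb : π b = ⟨(j : ℕ) + 1, h⟩ := π.apply_symm_apply _
    have hab : a ≠ b := by
      intro hEq
      have h2 : π a = π b := congrArg π hEq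
      rw [hπa, hπb] at h2
      have := congrArg Fin.val h2
      simp at this
    have hwge : w (π b) ≤ w (π a) := by
      rw [hπa, hπb, hw]
      simp only []
      have hxm : x ⟨(j : ℕ) + 1, h⟩ ≤ x j := hx2 j _ (by rw [Fin.le_def]; simp)
      rw [← hveq]
      linarith
    rcases lt_trichotomy a b with hlt | hEq | hgt
    · exact hlt
    · exact absurd hEq hab
    · -- b < a: derive contradiction via chain
      exfalso
      have hwle : w (π a) ≤ w (π b) := hw2 b a (le_of_lt hgt)
      have hweq : w (π b) = w (π a) := le_antisymm hwle hwge |>.symm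
      have hba : (b : ℕ) < (a : ℕ) := hgt
      set m := (a : ℕ) - (b : ℕ) - 1 with hm
      have haeq : a = ⟨(b : ℕ) + m + 1, by omega⟩ := by apply Fin.ext; simp; omega
      have := chain m b (by omega) (by rw [← haeq]; exact hweq)
      rw [← haeq, hπa, hπb] at this
      rw [Fin.lt_def] at this
      simp at this
  · -- kuhn membership: bounds
    intro i
    have := hw1 i
    rw [hw] at this
    exact this
  · intro i j hij
    have := hw2 i j hij
    rw [hw] at this
    exact this
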